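/- Let n ∈ ℕ with n ≥ 2, and let p, q, l, C, T be real numbers with p > 1, q > 0, D := 1 − q(p−1) > 0, p < n, l* := (p − nD)/(1 − D) < l < p, C > 0, T > 0, κ_l := (1 − D)(l − l*), and let u(x,t) := (T−t)^{(n−l)/κ_l} · (C + κ_l^{1/(p−1)} · (D/((p−l)q)) · ‖x‖^{(p−l)/(p−1)} · (T−t)^{(p−l)/((p−1)κ_l)})^{−(p−1)/D} for t < T. Then for every fixed t ∈ (0, T) and every real ζ with ζ(p−l) > D(n−l), the function x ↦ u(x,t)^ζ · ‖x‖^{−l} is integrable on ℝⁿ with respect to Lebesgue measure: ∫_{ℝⁿ} u(x,t)^ζ ‖x‖^{−l} dx < ∞. -/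

import Mathlib

open Real MeasureTheory Set Metric

open scoped ENNReal

lemma polar_lintegral {E : Type*} [NormedAddCommGroup E] [NormedSpace ℝ E]
    [MeasurableSpace E] [BorelSpace E] [FiniteDimensional ℝ E] [Nontrivial E]
    (μ : Measure E) [μ.IsAddHaarMeasure] {g : ℝ → ℝ≥0∞} (hg : Measurable g) :
    ∫⁻ x, g ‖x‖ ∂μ =
      μ.toSphere univ *
        ∫⁻ r in Ioi (0 : ℝ),
          ENNReal.ofReal (r ^ (Module.finrank ℝ E - 1)) * g r := by
  set m := Module.finrank ℝ E - 1 with hm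
  have h0 : ∫⁻ x, g ‖x‖ ∂μ = ∫⁻ x : ({0}ᶜ : Set E), g ‖(x : E)‖ ∂(μ.comap (↑)) :=
    ((lintegral_subtype_comap (measurableSet_singleton (0:E)).compl
      (fun y : E => g ‖y‖)).trans (by rw [restrict_compl_singleton])).symm
  have hmeas : Measurable (fun y : sphere (0:E) 1 × Ioi (0:ℝ) => g y.2) :=
    hg.comp (measurable_subtype_coe.comp measurable_snd)
  have h1 : ∫⁻ x : ({0}ᶜ : Set E), g ‖(x : E)‖ ∂(μ.comap (↑)) =
      ∫⁻ y : sphere (0:E) 1 × Ioi (0:ℝ), g y.2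
        ∂(μ.toSphere.prod (.volumeIoiPow m)) := by
    rw [← μ.measurePreserving_homeomorphUnitSphereProd.lintegral_comp hmeas]
    exact lintegral_congr fun x => by
      rw [homeomorphUnitSphereProd_apply_snd_coe]
  have h2 : ∫⁻ y : Ioi (0:ℝ), g y ∂(Measure.volumeIoiPow m) =
      ∫⁻ r in Ioi (0:ℝ), ENNReal.ofReal (r ^ m) * g r := by
    rw [Measure.volumeIoiPow,
      lintegral_withDensity_eq_lintegral_mul _
        ((measurable_subtype_coe.pow_const m).ennreal_ofReal)
        (show Measurable (fun y : Ioi (0:ℝ) => g y) from hg.comp measurable_subtype_coe)]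
    simp only [Pi.mul_apply]
    exact lintegral_subtype_comap measurableSet_Ioi
      (fun r : ℝ => ENNReal.ofReal (r ^ m) * g r)
  rw [h0, h1, lintegral_prod _ hmeas.aemeasurable]
  simp only []
  rw [lintegral_const, h2, mul_comm]

lemma integrableOn_aux (m : ℕ) (A B C αa e ζ l : ℝ) (hA : 0 < A) (hB : 0 < B) (hC : 0 < C)
    (hα : 0 < αa) (heζ : e * ζ ≤ 0)
    (h0 : (-1 : ℝ) < (m : ℝ) - l)
    (hinf : (m : ℝ) - l + αa * (e * ζ) < -1) :
    IntegrableOn (fun r : ℝ => r ^ m * ((A * (C + B * r ^ αa) ^ e) ^ ζ * r ^ (-l)))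
      (Ioi (0:ℝ)) := by
  set ψ : ℝ → ℝ := fun r => r ^ m * ((A * (C + B * r ^ αa) ^ e) ^ ζ * r ^ (-l)) with hψdef
  have hbase : ∀ r : ℝ, 0 < r → 0 < C + B * r ^ αa := fun r hr =>
    add_pos hC (mul_pos hB (Real.rpow_pos_of_pos hr αa))
  have hψ_eq : ∀ r : ℝ, 0 < r →
      ψ r = A ^ ζ * (C + B * r ^ αa) ^ (e * ζ) * r ^ ((m : ℝ) - l) := by
    intro r hr
    have hb := hbase r hr
    have h1 : (A * (C + B * r ^ αa) ^ e) ^ ζ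
        = A ^ ζ * (C + B * r ^ αa) ^ (e * ζ) := by
      rw [Real.mul_rpow hA.le (Real.rpow_nonneg hb.le e), ← Real.rpow_mul hb.le]
    have h2 : r ^ m * r ^ (-l) = r ^ ((m : ℝ) - l) := by
      rw [← Real.rpow_natCast r m, ← Real.rpow_add hr, sub_eq_add_neg]
    calc ψ r = (A * (C + B * r ^ αa) ^ e) ^ ζ * (r ^ m * r ^ (-l)) := by
          simp only [hψdef]; ring
      _ = A ^ ζ * (C + B * r ^ αa) ^ (e * ζ) * r ^ ((m : ℝ) - l) := by
          rw [h1, h2]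
  have hψmeas : Measurable ψ :=
    (measurable_id.pow_const m).mul
      ((((measurable_const.add ((measurable_id.pow_const αa).const_mul B)).pow_const
        e).const_mul A).pow_const ζ |>.mul (measurable_id.pow_const (-l)))
  have hψnn : ∀ r : ℝ, 0 < r → 0 ≤ ψ r := by
    intro r hr
    rw [hψ_eq r hr]
    exact mul_nonneg (mul_nonneg (Real.rpow_nonneg hA.le ζ)
      (Real.rpow_nonneg (hbase r hr).le _)) (Real.rpow_nonneg hr.le _)
  rw [← Ioc_union_Ioi_eq_Ioi (zero_le_one (α := ℝ))]
  apply IntegrableOn.union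
  · -- on (0, 1]
    have hb : IntegrableOn (fun r : ℝ => A ^ ζ * C ^ (e * ζ) * r ^ ((m : ℝ) - l))
        (Ioc 0 1) := by
      apply Integrable.const_mul
      have := intervalIntegral.intervalIntegrable_rpow' (a := (0:ℝ)) (b := 1) h0
      rwa [intervalIntegrable_iff_integrableOn_Ioc_of_le zero_le_one] at this
    refine hb.mono' (hψmeas.aestronglyMeasurable) ?_
    filter_upwards [ae_restrict_mem measurableSet_Ioc] with r hr
    rw [Real.norm_of_nonneg (hψnn r hr.1), hψ_eq r hr.1]
    have hX : (C + B * r ^ αa) ^ (e * ζ) ≤ C ^ (e * ζ) :=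
      Real.rpow_le_rpow_of_nonpos hC
        (le_add_of_nonneg_right (mul_nonneg hB.le (Real.rpow_nonneg hr.1.le αa))) heζ
    exact mul_le_mul_of_nonneg_right
      (mul_le_mul_of_nonneg_left hX (Real.rpow_nonneg hA.le ζ))
      (Real.rpow_nonneg hr.1.le _)
  · -- on (1, ∞)
    have hb : IntegrableOn
        (fun r : ℝ => A ^ ζ * B ^ (e * ζ) * r ^ ((m : ℝ) - l + αa * (e * ζ)))
        (Ioi 1) :=
      (integrableOn_Ioi_rpow_of_lt hinf zero_lt_one).const_mul _
    refine hb.mono' (hψmeas.aestronglyMeasurable) ?_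
    filter_upwards [ae_restrict_mem measurableSet_Ioi] with r hr
    have hr0 : (0:ℝ) < r := lt_trans zero_lt_one hr
    rw [Real.norm_of_nonneg (hψnn r hr0), hψ_eq r hr0]
    have hX : (C + B * r ^ αa) ^ (e * ζ) ≤ (B * r ^ αa) ^ (e * ζ) :=
      Real.rpow_le_rpow_of_nonpos (mul_pos hB (Real.rpow_pos_of_pos hr0 αa))
        (le_add_of_nonneg_left hC.le) heζ
    have hBr : (B * r ^ αa) ^ (e * ζ) = B ^ (e * ζ) * r ^ (αa * (e * ζ)) := by
      rw [Real.mul_rpow hB.le (Real.rpow_nonneg hr0.le αa), ← Real.rpow_mul hr0.le]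
    calc A ^ ζ * (C + B * r ^ αa) ^ (e * ζ) * r ^ ((m : ℝ) - l)
        ≤ A ^ ζ * (B * r ^ αa) ^ (e * ζ) * r ^ ((m : ℝ) - l) :=
          mul_le_mul_of_nonneg_right
            (mul_le_mul_of_nonneg_left hX (Real.rpow_nonneg hA.le ζ))
            (Real.rpow_nonneg hr0.le _)
      _ = A ^ ζ * B ^ (e * ζ) * r ^ ((m : ℝ) - l + αa * (e * ζ)) := by
          rw [hBr, Real.rpow_add hr0]; ring

theorem stmt3 (n : ℕ) (hn : 2 ≤ n) (p q l C T : ℝ)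
    (hp : 1 < p) (hq : 0 < q)
    (D : ℝ) (hDdef : D = 1 - q * (p - 1)) (hD : 0 < D)
    (hpn : p < n)
    (lstar : ℝ) (hlstar : lstar = (p - n * D) / (1 - D))
    (hl1 : lstar < l) (hl2 : l < p)
    (hC : 0 < C) (hT : 0 < T)
    (κl : ℝ) (hκ : κl = (1 - D) * (l - lstar))
    (u : EuclideanSpace ℝ (Fin n) → ℝ → ℝ)
    (hu : ∀ x t, u x t = (T - t) ^ ((n - l) / κl) *
        (C + κl ^ ((1 : ℝ) / (p - 1)) * (D / ((p - l) * q)) *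
          ‖x‖ ^ ((p - l) / (p - 1)) * (T - t) ^ ((p - l) / ((p - 1) * κl))) ^ (-(p - 1) / D)) :
    ∀ t ∈ Set.Ioo 0 T, ∀ ζ : ℝ, D * (n - l) < ζ * (p - l) →
      ∫⁻ x : EuclideanSpace ℝ (Fin n), ENNReal.ofReal (u x t ^ ζ * ‖x‖ ^ (-l)) < ∞ := by
  intro t ht ζ hζc
  obtain ⟨ht0, htT⟩ := ht
  have hTt : 0 < T - t := sub_pos.mpr htT
  have hp1 : (0:ℝ) < p - 1 := by linarith
  have hpl : (0:ℝ) < p - l := by linarith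
  have hnl : (0:ℝ) < (n:ℝ) - l := by linarith
  have h1D : 0 < 1 - D := by
    have := mul_pos hq hp1
    rw [hDdef]; linarith
  have hκpos : 0 < κl := by rw [hκ]; exact mul_pos h1D (by linarith)
  have hζpos : 0 < ζ := by
    by_contra h
    push_neg at h
    nlinarith [mul_pos hD hnl]
  obtain ⟨α, hαdef⟩ : ∃ a : ℝ, a = (p - l) / (p - 1) := ⟨_, rfl⟩
  have hα : 0 < α := hαdef ▸ div_pos hpl hp1
  obtain ⟨e, hedef⟩ : ∃ a : ℝ, a = -(p - 1) / D := ⟨_, rfl⟩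
  have he : e < 0 := hedef ▸ div_neg_of_neg_of_pos (by linarith) hD
  have heζ : e * ζ ≤ 0 := mul_nonpos_iff.mpr (Or.inr ⟨he.le, hζpos.le⟩)
  obtain ⟨A, hAdef⟩ : ∃ a : ℝ, a = (T - t) ^ (((n:ℝ) - l) / κl) := ⟨_, rfl⟩
  have hA : 0 < A := hAdef ▸ Real.rpow_pos_of_pos hTt _
  obtain ⟨B, hBdef⟩ : ∃ a : ℝ, a = κl ^ ((1:ℝ) / (p - 1)) * (D / ((p - l) * q)) *
      (T - t) ^ ((p - l) / ((p - 1) * κl)) := ⟨_, rfl⟩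
  have hB : 0 < B := hBdef ▸ mul_pos (mul_pos (Real.rpow_pos_of_pos hκpos _)
      (div_pos hD (mul_pos hpl hq))) (Real.rpow_pos_of_pos hTt _)
  have hux : ∀ x : EuclideanSpace ℝ (Fin n), u x t = A * (C + B * ‖x‖ ^ α) ^ e := by
    intro x
    rw [hu, hAdef, hBdef, hαdef, hedef]
    congr 2
    ring
  have hmcast : ((n - 1 : ℕ) : ℝ) = (n:ℝ) - 1 := by
    rw [Nat.cast_sub (by omega : 1 ≤ n)]; norm_num
  have h0 : (-1:ℝ) < ((n - 1 : ℕ) : ℝ) - l := by rw [hmcast]; linarith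
  have hαeζ : α * (e * ζ) = -(ζ * (p - l) / D) := by
    rw [hαdef, hedef]; field_simp
  have hinf : ((n - 1 : ℕ) : ℝ) - l + α * (e * ζ) < -1 := by
    rw [hmcast, hαeζ]
    have h2 : (n:ℝ) - l < ζ * (p - l) / D := by
      rw [lt_div_iff₀ hD]
      nlinarith
    linarith
  have hIntOn := integrableOn_aux (n - 1) A B C α e ζ l hA hB hC hα heζ h0 hinf
  have hφmeas : Measurable (fun r : ℝ => (A * (C + B * r ^ α) ^ e) ^ ζ * r ^ (-l)) :=
    ((((measurable_const.add ((measurable_id.pow_const α).const_mul B)).pow_const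
      e).const_mul A).pow_const ζ).mul (measurable_id.pow_const (-l))
  obtain ⟨g, hgdef⟩ : ∃ g : ℝ → ℝ≥0∞,
      g = fun r : ℝ => ENNReal.ofReal ((A * (C + B * r ^ α) ^ e) ^ ζ * r ^ (-l)) := ⟨_, rfl⟩
  have hg : Measurable g := hgdef ▸ hφmeas.ennreal_ofReal
  haveI : NeZero n := ⟨by omega⟩
  haveI : Nontrivial (EuclideanSpace ℝ (Fin n)) := inferInstance
  calc ∫⁻ x : EuclideanSpace ℝ (Fin n), ENNReal.ofReal (u x t ^ ζ * ‖x‖ ^ (-l))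
      = ∫⁻ x : EuclideanSpace ℝ (Fin n), g ‖x‖ :=
        lintegral_congr fun x => by simp only [hgdef]; rw [hux x]
    _ = (volume : Measure (EuclideanSpace ℝ (Fin n))).toSphere univ *
          ∫⁻ r in Ioi (0:ℝ),
            ENNReal.ofReal (r ^ (Module.finrank ℝ (EuclideanSpace ℝ (Fin n)) - 1)) * g r :=
        polar_lintegral volume hg
    _ < ∞ := by
        refine ENNReal.mul_lt_top (measure_lt_top _ _) ?_
        rw [finrank_euclideanSpace_fin]
        have hle : ∫⁻ r in Ioi (0:ℝ), ENNReal.ofReal (r ^ (n - 1)) * g r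
            ≤ ∫⁻ r in Ioi (0:ℝ),
              ‖r ^ (n - 1) * ((A * (C + B * r ^ α) ^ e) ^ ζ * r ^ (-l))‖₊ := by
          apply lintegral_mono_ae
          filter_upwards [ae_restrict_mem measurableSet_Ioi] with r hr
          rw [hgdef]
          calc ENNReal.ofReal (r ^ (n - 1)) *
                ENNReal.ofReal ((A * (C + B * r ^ α) ^ e) ^ ζ * r ^ (-l))
              = ENNReal.ofReal (r ^ (n - 1) * ((A * (C + B * r ^ α) ^ e) ^ ζ * r ^ (-l))) :=
                (ENNReal.ofReal_mul (pow_nonneg (le_of_lt hr) _)).symm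
            _ ≤ ‖r ^ (n - 1) * ((A * (C + B * r ^ α) ^ e) ^ ζ * r ^ (-l))‖₊ :=
                Real.ofReal_le_enorm _
        exact lt_of_le_of_lt hle hIntOn.hasFiniteIntegral
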